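/- Let κ > 0, Φ₀ ≥ 0, L > 0, d ≥ 1, and ρ̄ the mean of the truncated Gaussian stationary state: ρ̄ = Φ₀/L^d + √2 exp(−(κ/2)Φ₀²)/(L^d √(πκ)(1 + erf(Φ₀√κ/√2))). Then L^d ρ̄² κ = (2/L^d)(f(η) + η)² with η = √(κ/2) Φ₀ and f(η) = (1/√π) exp(−η²)/(1 + erf(η)). Consequently, L^d ρ̄² κ > 1/L^d − L^d ρ̄ (ρ̄ − Φ₀/L^d) κ, i.e. 2(f(η)+η)² > g(η), where g(η) = 1 − 2 f(η)(f(η)+η). -/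

import Mathlib

set_option maxHeartbeats 1000000

open Real MeasureTheory

noncomputable def erf (z : ℝ) : ℝ := (2 / Real.sqrt π) * ∫ s in (0:ℝ)..z, Real.exp (-s^2)

noncomputable def f (η : ℝ) : ℝ := (1 / Real.sqrt π) * Real.exp (-η^2) / (1 + erf η)

noncomputable def g (η : ℝ) : ℝ := 1 - 2 * f η * (f η + η)

lemma erf_nonneg' {η : ℝ} (hη : 0 ≤ η) : 0 ≤ erf η := by
  unfold erf
  apply mul_nonneg (by positivity)
  apply intervalIntegral.integral_nonneg hη
  intro x _; positivity

lemma erf_le {η : ℝ} (hη : 0 ≤ η) : erf η ≤ 2 * η / Real.sqrt π := by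
  unfold erf
  have h : (∫ s in (0:ℝ)..η, Real.exp (-s^2)) ≤ ∫ s in (0:ℝ)..η, (1:ℝ) := by
    apply intervalIntegral.integral_mono_on hη
    · apply Continuous.intervalIntegrable; continuity
    · exact intervalIntegrable_const
    · intro x _
      calc Real.exp (-x^2) ≤ Real.exp 0 := Real.exp_le_exp.mpr (by nlinarith)
        _ = 1 := Real.exp_zero
  have h1 : (∫ s in (0:ℝ)..η, (1:ℝ)) = η := by simp
  rw [h1] at h
  have hsp : 0 < Real.sqrt π := Real.sqrt_pos.mpr Real.pi_pos
  calc (2 / Real.sqrt π) * ∫ s in (0:ℝ)..η, Real.exp (-s^2)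
      ≤ (2 / Real.sqrt π) * η := by gcongr
    _ = 2 * η / Real.sqrt π := by ring

lemma f_pos {η : ℝ} (hη : 0 ≤ η) : 0 < f η := by
  unfold f
  have h1 : (0:ℝ) < 1 + erf η := by linarith [erf_nonneg' hη]
  positivity

lemma key {η : ℝ} (hη : 0 ≤ η) : 1/2 < (f η + η) * (2 * f η + η) := by
  have hf := f_pos hη
  rcases le_or_gt (1/2) (η^2) with h | h
  · nlinarith
  · have hsp : 0 < Real.sqrt π := Real.sqrt_pos.mpr Real.pi_pos
    have hs2 : Real.sqrt π ^ 2 = π := Real.sq_sqrt Real.pi_pos.le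
    have he : erf η ≤ 2 * η / Real.sqrt π := erf_le hη
    have he' : erf η * Real.sqrt π ≤ 2 * η := (le_div_iff₀ hsp).mp he
    have hE : (0:ℝ) < 1 + erf η := by linarith [erf_nonneg' hη]
    have hexp : 1 - η^2 ≤ Real.exp (-η^2) := by
      linarith [Real.add_one_le_exp (-η^2)]
    have hden : Real.sqrt π * (1 + erf η) ≤ Real.sqrt π + 2 * η := by nlinarith
    have hdp : (0:ℝ) < Real.sqrt π + 2 * η := by positivity
    have hstep : (1 - η^2) * (1 + erf η) * Real.sqrt π
        ≤ Real.exp (-η^2) * (Real.sqrt π + 2*η) := by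
      calc (1 - η^2) * (1 + erf η) * Real.sqrt π
          = (1 - η^2) * (Real.sqrt π * (1 + erf η)) := by ring
        _ ≤ (1 - η^2) * (Real.sqrt π + 2*η) := by
            apply mul_le_mul_of_nonneg_left hden; nlinarith
        _ ≤ Real.exp (-η^2) * (Real.sqrt π + 2*η) :=
            mul_le_mul_of_nonneg_right hexp hdp.le
    have hflb : (1 - η^2) / (Real.sqrt π + 2 * η) ≤ f η := by
      unfold f
      rw [div_le_div_iff₀ hdp hE, ← mul_le_mul_iff_of_pos_right hsp]
      calc (1 - η^2) * (1 + erf η) * Real.sqrt π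
          ≤ Real.exp (-η^2) * (Real.sqrt π + 2*η) := hstep
        _ = 1 / Real.sqrt π * Real.exp (-η^2) * (Real.sqrt π + 2*η) * Real.sqrt π := by
            field_simp
    set s := Real.sqrt π with hs
    have hsl : (1.77:ℝ) < s := by nlinarith [Real.pi_gt_d6]
    have hsu : s < 1.7725 := by nlinarith [Real.pi_lt_d6]
    have hlb : (0:ℝ) < (1 - η^2) / (s + 2*η) := div_pos (by nlinarith) hdp
    have hηu : η < 0.708 := by nlinarith
    set F := f η
    have hFlb : (1 - η^2) / (s + 2*η) ≤ F := hflb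
    have hkey : 2*(1-η^2)^2 + 3*η*(1-η^2)*(s+2*η) - (1/2 - η^2)*(s+2*η)^2 > 0 := by
      nlinarith [sq_nonneg (η - 0.3), sq_nonneg η, sq_nonneg (s - 1.77), sq_nonneg (η*(s-1.77))]
    have h2 : 2*((1-η^2)/(s+2*η))^2 + 3*η*((1-η^2)/(s+2*η)) + η^2 > 1/2 := by
      rw [div_pow, gt_iff_lt, ← sub_pos]
      have e1 : 2*((1-η^2)^2/(s+2*η)^2) + 3*η*((1-η^2)/(s+2*η)) + η^2 - 1/2
          = (2*(1-η^2)^2 + 3*η*(1-η^2)*(s+2*η) - (1/2 - η^2)*(s+2*η)^2) / (s+2*η)^2 := by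
        field_simp; ring
      rw [e1]
      positivity
    nlinarith [mul_le_mul_of_nonneg_left hFlb (le_of_lt hlb),
      mul_le_mul_of_nonneg_left hFlb (mul_nonneg (by norm_num : (0:ℝ) ≤ 3) hη)]

theorem stmt13 (κ Φ₀ L : ℝ) (d : ℕ) (hκ : 0 < κ) (hΦ : 0 ≤ Φ₀) (hL : 0 < L) (hd : 1 ≤ d)
    (ρbar : ℝ)
    (hρbar : ρbar = Φ₀ / L^d +
      Real.sqrt 2 * Real.exp (-(κ/2) * Φ₀^2) /
        (L^d * Real.sqrt (π * κ) * (1 + erf (Φ₀ * Real.sqrt κ / Real.sqrt 2))))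
    (η : ℝ) (hη : η = Real.sqrt (κ / 2) * Φ₀) :
    L^d * ρbar^2 * κ = (2 / L^d) * (f η + η)^2 ∧
    1 / L^d - L^d * ρbar * (ρbar - Φ₀ / L^d) * κ < L^d * ρbar^2 * κ ∧
    g η < 2 * (f η + η)^2 := by
  have hsk : 0 < Real.sqrt κ := Real.sqrt_pos.mpr hκ
  have hs2 : 0 < Real.sqrt 2 := by positivity
  have hsp : 0 < Real.sqrt π := Real.sqrt_pos.mpr Real.pi_pos
  have hA : (0:ℝ) < L^d := by positivity
  have hd2 : Real.sqrt (κ/2) = Real.sqrt κ / Real.sqrt 2 := Real.sqrt_div' κ (by norm_num)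
  have harg : Φ₀ * Real.sqrt κ / Real.sqrt 2 = η := by rw [hη, hd2]; ring
  have hηnn : 0 ≤ η := by rw [hη]; positivity
  have hE : (0:ℝ) < 1 + erf η := by linarith [erf_nonneg' hηnn]
  have hexp : Real.exp (-(κ/2) * Φ₀^2) = Real.exp (-η^2) := by
    rw [hη, mul_pow, Real.sq_sqrt (by positivity : (0:ℝ) ≤ κ/2)]
    ring_nf
  have hπκ : Real.sqrt (π * κ) = Real.sqrt π * Real.sqrt κ :=
    Real.sqrt_mul Real.pi_pos.le κ
  have hρ2 : ρbar = Real.sqrt 2 / Real.sqrt κ * (f η + η) / L^d := by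
    have t1 : Φ₀ / L^d = Real.sqrt 2 / Real.sqrt κ * η / L^d := by
      rw [hη, hd2]; field_simp
    have t2 : Real.sqrt 2 * Real.exp (-η^2) /
        (L^d * (Real.sqrt π * Real.sqrt κ) * (1 + erf η))
        = Real.sqrt 2 / Real.sqrt κ * f η / L^d := by
      unfold f; field_simp
    rw [hρbar, harg, hexp, hπκ, t1, t2]; ring
  have hsq : (Real.sqrt 2 / Real.sqrt κ)^2 = 2 / κ := by
    rw [div_pow, Real.sq_sqrt (by norm_num : (0:ℝ) ≤ 2), Real.sq_sqrt hκ.le]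
  have h1 : L^d * ρbar^2 * κ = (2 / L^d) * (f η + η)^2 := by
    rw [hρ2]
    have e : L^d * (Real.sqrt 2 / Real.sqrt κ * (f η + η) / L^d)^2 * κ
        = (Real.sqrt 2 / Real.sqrt κ)^2 * κ * (f η + η)^2 / L^d := by
      have h2sq : Real.sqrt 2 ^ 2 = 2 := Real.sq_sqrt (by norm_num)
      have hκsq : Real.sqrt κ ^ 2 = κ := Real.sq_sqrt hκ.le
      field_simp
    rw [e, hsq]; field_simp
  have hdiff : ρbar - Φ₀ / L^d = Real.sqrt 2 / Real.sqrt κ * f η / L^d := by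
    rw [hρ2, hη, hd2]; field_simp; ring
  have h2' : L^d * ρbar * (ρbar - Φ₀ / L^d) * κ = (2 / L^d) * (f η * (f η + η)) := by
    rw [hdiff, hρ2]
    have e : L^d * (Real.sqrt 2 / Real.sqrt κ * (f η + η) / L^d) *
        (Real.sqrt 2 / Real.sqrt κ * f η / L^d) * κ
        = (Real.sqrt 2 / Real.sqrt κ)^2 * κ * (f η * (f η + η)) / L^d := by
      have h2sq : Real.sqrt 2 ^ 2 = 2 := Real.sq_sqrt (by norm_num)
      have hκsq : Real.sqrt κ ^ 2 = κ := Real.sq_sqrt hκ.le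
      field_simp
    rw [e, hsq]; field_simp
  have hkey := key hηnn
  have h3 : g η < 2 * (f η + η)^2 := by unfold g; nlinarith
  refine ⟨h1, ?_, h3⟩
  rw [h1, h2']
  have hbase : 1 - 2 * (f η * (f η + η)) < 2 * (f η + η)^2 := by nlinarith [hkey]
  calc 1 / L^d - 2 / L^d * (f η * (f η + η))
      = (1 - 2 * (f η * (f η + η))) / L^d := by ring
    _ < (2 * (f η + η)^2) / L^d := by gcongr
    _ = 2 / L^d * (f η + η)^2 := by ring
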